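/- Let f = Σ_{σ∈S₃} a_σ x_{σ(1)}x_{σ(2)}x_{σ(3)} be a multilinear complex polynomial of degree 3 and let d ∈ ℕ. If the image {f(A,B,C) : A,B,C ∈ M_d(ℂ)} is a vector subspace of M_d(ℂ), then it equals one of: {0}, ℂ·I_d, the trace-zero matrices, or all of M_d(ℂ). -/

import Mathlib

open Matrix

namespace ImageSubspaceAux

variable {d : ℕ}

/-- abbreviation for matrix units with entry 1 -/
noncomputable def E (i j : Fin d) : Matrix (Fin d) (Fin d) ℂ :=
  single i j (1 : ℂ)

lemma E_mul_apply (i j : Fin d) (y : Matrix (Fin d) (Fin d) ℂ) (p q : Fin d) :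
    (E i j * y) p q = if p = i then y j q else 0 := by
  rcases eq_or_ne p i with rfl | h
  · simp [E]
  · simp [E, h]

lemma mul_E_apply (i j : Fin d) (y : Matrix (Fin d) (Fin d) ℂ) (p q : Fin d) :
    (y * E i j) p q = if q = j then y p i else 0 := by
  rcases eq_or_ne q j with rfl | h
  · simp [E]
  · simp [E, h]

lemma E_mul_E_same (i j k : Fin d) : E i j * E j k = E i k := by
  simp [E]

lemma E_mul_E_ne {i j k l : Fin d} (h : j ≠ k) : E i j * E k l = 0 :=
  Matrix.single_mul_single_of_ne (c := (1 : ℂ)) i j k h 1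

lemma E_sq {i j : Fin d} (h : i ≠ j) : E i j * E i j = 0 :=
  E_mul_E_ne (Ne.symm h)

lemma E_sandwich (i j : Fin d) (y : Matrix (Fin d) (Fin d) ℂ) :
    E i j * y * E i j = y j i • E i j := by
  ext p q
  rw [Matrix.smul_apply, mul_E_apply]
  by_cases hq : q = j
  · rw [if_pos hq, E_mul_apply]
    by_cases hp : p = i
    · subst hp; subst hq; simp [E]
    · rw [if_neg hp,
        show (E i j) p q = 0 from
          Matrix.single_apply_of_ne i j 1 p q (fun hc => hp hc.1.symm), smul_zero]
  · rw [if_neg hq,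
      show (E i j) p q = 0 from
        Matrix.single_apply_of_ne i j 1 p q (fun hc => hq hc.2.symm), smul_zero]

section Main

variable (a123 a132 a213 a231 a312 a321 : ℂ)
    (S : Submodule ℂ (Matrix (Fin d) (Fin d) ℂ))

/-- membership characterization coming from the image hypothesis -/
lemma mem_iff
    (hS : (S : Set (Matrix (Fin d) (Fin d) ℂ)) =
      {X | ∃ A B C : Matrix (Fin d) (Fin d) ℂ,
        a123 • (A * B * C) + a132 • (A * C * B) + a213 • (B * A * C) +
          a231 • (B * C * A) + a312 • (C * A * B) + a321 • (C * B * A) = X})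
    (X : Matrix (Fin d) (Fin d) ℂ) :
    X ∈ S ↔ ∃ A B C : Matrix (Fin d) (Fin d) ℂ,
        a123 • (A * B * C) + a132 • (A * C * B) + a213 • (B * A * C) +
          a231 • (B * C * A) + a312 • (C * A * B) + a321 • (C * B * A) = X := by
  have h : X ∈ (S : Set (Matrix (Fin d) (Fin d) ℂ)) ↔ X ∈ ({X | ∃ A B C : Matrix (Fin d) (Fin d) ℂ,
        a123 • (A * B * C) + a132 • (A * C * B) + a213 • (B * A * C) +
          a231 • (B * C * A) + a312 • (C * A * B) + a321 • (C * B * A) = X} :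
      Set (Matrix (Fin d) (Fin d) ℂ)) := by rw [hS]
  simpa using h

/-- the image (hence `S`) is closed under conjugation by `1 + N` for square-zero `N`. -/
lemma conj_mem
    (hS : (S : Set (Matrix (Fin d) (Fin d) ℂ)) =
      {X | ∃ A B C : Matrix (Fin d) (Fin d) ℂ,
        a123 • (A * B * C) + a132 • (A * C * B) + a213 • (B * A * C) +
          a231 • (B * C * A) + a312 • (C * A * B) + a321 • (C * B * A) = X})
    (N : Matrix (Fin d) (Fin d) ℂ) (hN : N * N = 0)
    {y : Matrix (Fin d) (Fin d) ℂ} (hy : y ∈ S) :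
    (1 + N) * y * (1 - N) ∈ S := by
  set g : Matrix (Fin d) (Fin d) ℂ := 1 + N with hg
  set g' : Matrix (Fin d) (Fin d) ℂ := 1 - N with hg'
  have h1 : g' * g = 1 := by
    have : g' * g = 1 - N * N := by rw [hg, hg']; noncomm_ring
    rw [this, hN, sub_zero]
  have hk : ∀ X Y : Matrix (Fin d) (Fin d) ℂ, (g * X * g') * (g * Y * g') = g * (X * Y) * g' := by
    intro X Y
    calc (g * X * g') * (g * Y * g') = g * (X * ((g' * g) * (Y * g'))) := by
          simp only [mul_assoc]
      _ = g * (X * Y) * g' := by rw [h1, one_mul]; simp only [mul_assoc]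
  have hk3 : ∀ X Y Z : Matrix (Fin d) (Fin d) ℂ,
      (g * X * g') * (g * Y * g') * (g * Z * g') = g * (X * Y * Z) * g' := by
    intro X Y Z
    rw [hk, hk]
  rw [mem_iff a123 a132 a213 a231 a312 a321 S hS] at hy ⊢
  obtain ⟨A, B, C, hf⟩ := hy
  refine ⟨g * A * g', g * B * g', g * C * g', ?_⟩
  rw [hk3, hk3, hk3, hk3, hk3, hk3, ← hf]
  simp only [mul_add, add_mul, mul_smul_comm, smul_mul_assoc]

/-- `S` is closed under bracketing with off-diagonal matrix units. -/
lemma bracket_mem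
    (hS : (S : Set (Matrix (Fin d) (Fin d) ℂ)) =
      {X | ∃ A B C : Matrix (Fin d) (Fin d) ℂ,
        a123 • (A * B * C) + a132 • (A * C * B) + a213 • (B * A * C) +
          a231 • (B * C * A) + a312 • (C * A * B) + a321 • (C * B * A) = X})
    {i j : Fin d} (hij : i ≠ j)
    {y : Matrix (Fin d) (Fin d) ℂ} (hy : y ∈ S) :
    E i j * y - y * E i j ∈ S := by
  set N := E i j with hNdef
  have hN : N * N = 0 := E_sq hij
  have hN' : (-N) * (-N) = 0 := by rw [neg_mul_neg, hN]
  have hu : (1 + N) * y * (1 - N) ∈ S := conj_mem _ _ _ _ _ _ _ hS N hN hy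
  have hv : (1 + (-N)) * y * (1 - (-N)) ∈ S := conj_mem _ _ _ _ _ _ _ hS (-N) hN' hy
  have key : (1 + N) * y * (1 - N) - (1 + (-N)) * y * (1 - (-N))
      = (N * y - y * N) + (N * y - y * N) := by noncomm_ring
  have h2 : N * y - y * N =
      (2⁻¹ : ℂ) • ((1 + N) * y * (1 - N) - (1 + (-N)) * y * (1 - (-N))) := by
    rw [key, ← two_smul ℂ (N * y - y * N), smul_smul]
    norm_num
  rw [h2]
  exact S.smul_mem _ (S.sub_mem hu hv)

/-- generation: from a single off-diagonal unit, `S` contains all off-diagonal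
units and all diagonal differences. -/
lemma generation
    (Hbr : ∀ i j : Fin d, i ≠ j → ∀ y ∈ S, E i j * y - y * E i j ∈ S)
    {i j : Fin d} (hij : i ≠ j) (hEij : E i j ∈ S) :
    (∀ k l : Fin d, k ≠ l → E k l ∈ S) ∧ (∀ k : Fin d, E k k - E j j ∈ S) := by
  -- step 1 : all units in column j
  have step1 : ∀ k : Fin d, k ≠ j → E k j ∈ S := by
    intro k hk
    rcases eq_or_ne k i with rfl | hki
    · exact hEij
    · have h := Hbr k i hki (E i j) hEij
      have he : E k i * E i j - E i j * E k i = E k j := by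
        rw [E_mul_E_same, E_mul_E_ne (Ne.symm hk), sub_zero]
      rwa [he] at h
  -- step 2 : diagonal differences
  have step2 : ∀ k : Fin d, E k k - E j j ∈ S := by
    intro k
    rcases eq_or_ne k j with rfl | hk
    · rw [sub_self]; exact S.zero_mem
    · have h := Hbr j k (Ne.symm hk) (E k j) (step1 k hk)
      have he : E j k * E k j - E k j * E j k = -(E k k - E j j) := by
        rw [E_mul_E_same, E_mul_E_same]; abel
      rw [he] at h
      exact (S.neg_mem_iff).1 h
  refine ⟨?_, step2⟩
  intro k l hkl
  rcases eq_or_ne l j with rfl | hlj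
  · exact step1 k hkl
  · rcases eq_or_ne k j with rfl | hkj
    · -- row j units : bracket with diagonal difference
      have h := Hbr k l hkl (E l l - E k k) (step2 l)
      have he : E k l * (E l l - E k k) - (E l l - E k k) * E k l
          = E k l + E k l := by
        rw [mul_sub, sub_mul, E_mul_E_same, E_mul_E_same,
          E_mul_E_ne (Ne.symm hkl), E_mul_E_ne (Ne.symm hkl)]
        abel
      rw [he, ← two_smul ℂ (E k l)] at h
      have := S.smul_mem (2⁻¹ : ℂ) h
      rwa [smul_smul, (by norm_num : (2⁻¹ : ℂ) * 2 = 1), one_smul] at this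
    · -- generic unit
      have h := Hbr j l (fun he => hlj (he.symm)) (E k j) (step1 k hkj)
      have he : E j l * E k j - E k j * E j l = -(E k l) := by
        rw [E_mul_E_ne (Ne.symm hkl), E_mul_E_same, zero_sub]
      rw [he] at h
      exact (S.neg_mem_iff).1 h


/-- every traceless matrix lies in `S` once the units and diagonal differences do. -/
lemma traceless_mem (S : Submodule ℂ (Matrix (Fin d) (Fin d) ℂ)) (j : Fin d)
    (hD : ∀ k l : Fin d, k ≠ l → E k l ∈ S)
    (hDiag : ∀ k : Fin d, E k k - E j j ∈ S)
    (m : Matrix (Fin d) (Fin d) ℂ) (hm : Matrix.trace m = 0) : m ∈ S := by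
  classical
  have h1 : ∀ k l : Fin d, (m k l) • (if k = l then E k k - E j j else E k l)
      = single k l (m k l)
        - (if k = l then (m k l) • E j j else (0 : Matrix (Fin d) (Fin d) ℂ)) := by
    intro k l
    split_ifs with h
    · subst h
      rw [smul_sub]
      congr 1
      rw [E, smul_single, smul_eq_mul, mul_one]
    · rw [E, smul_single, smul_eq_mul, mul_one, sub_zero]
  have hm' : ∑ k : Fin d, m k k = 0 := by
    simpa [Matrix.trace, Matrix.diag] using hm
  have hrep : ∑ k : Fin d, ∑ l : Fin d,
      (m k l) • (if k = l then E k k - E j j else E k l) = m := by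
    simp only [h1]
    simp only [Finset.sum_sub_distrib]
    rw [← matrix_eq_sum_single m]
    have h2 : ∀ k : Fin d,
        ∑ l : Fin d, (if k = l then (m k l) • E j j else (0 : Matrix (Fin d) (Fin d) ℂ))
        = (m k k) • E j j := by
      intro k
      simp
    calc m - ∑ k : Fin d, ∑ l : Fin d,
          (if k = l then (m k l) • E j j else (0 : Matrix (Fin d) (Fin d) ℂ))
        = m - ∑ k : Fin d, (m k k) • E j j := by
          congr 1
          exact Finset.sum_congr rfl fun k _ => h2 k
      _ = m := by rw [← Finset.sum_smul, hm', zero_smul, sub_zero]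
  rw [← hrep]
  refine Submodule.sum_mem _ fun k _ => Submodule.sum_mem _ fun l _ => ?_
  refine Submodule.smul_mem _ _ ?_
  split_ifs with h
  · exact hDiag k
  · exact hD k l h

end Main

end ImageSubspaceAux

open ImageSubspaceAux

/-- if the image of a multilinear degree-3 polynomial on `M_d(ℂ)` is a
vector subspace, then it is `{0}`, `ℂ·I`, the trace-zero matrices, or `M_d(ℂ)`. -/
theorem image_subspace_classification (d : ℕ)
    (a123 a132 a213 a231 a312 a321 : ℂ)
    (S : Submodule ℂ (Matrix (Fin d) (Fin d) ℂ))
    (hS : (S : Set (Matrix (Fin d) (Fin d) ℂ)) =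
      {X | ∃ A B C : Matrix (Fin d) (Fin d) ℂ,
        a123 • (A * B * C) + a132 • (A * C * B) + a213 • (B * A * C) +
          a231 • (B * C * A) + a312 • (C * A * B) + a321 • (C * B * A) = X}) :
    (S : Set (Matrix (Fin d) (Fin d) ℂ)) = {0} ∨
    S = Submodule.span ℂ {(1 : Matrix (Fin d) (Fin d) ℂ)} ∨
    (S : Set (Matrix (Fin d) (Fin d) ℂ)) = {X | Matrix.trace X = 0} ∨
    S = ⊤ := by
  classical
  rcases Nat.eq_zero_or_pos d with hd0 | hdpos
  · subst hd0
    right; right; right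
    rw [eq_top_iff]
    intro x _
    have hx : x = 0 := by ext i j; exact i.elim0
    rw [hx]; exact S.zero_mem
  by_cases hcen : ∀ y ∈ S, ∃ c : ℂ, y = c • (1 : Matrix (Fin d) (Fin d) ℂ)
  · by_cases hz : ∀ y ∈ S, y = (0 : Matrix (Fin d) (Fin d) ℂ)
    · left
      ext x
      simp only [Set.mem_singleton_iff, SetLike.mem_coe]
      exact ⟨fun h => hz x h, fun h => h ▸ S.zero_mem⟩
    · right; left
      push_neg at hz
      obtain ⟨y, hyS, hy0⟩ := hz
      obtain ⟨c, rfl⟩ := hcen y hyS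
      have hc : c ≠ 0 := by rintro rfl; simp at hy0
      have h1 : (1 : Matrix (Fin d) (Fin d) ℂ) ∈ S := by
        have := S.smul_mem c⁻¹ hyS
        rwa [smul_smul, inv_mul_cancel₀ hc, one_smul] at this
      apply le_antisymm
      · intro x hx
        obtain ⟨c', rfl⟩ := hcen x hx
        exact Submodule.smul_mem _ _ (Submodule.mem_span_singleton_self _)
      · rw [Submodule.span_le, Set.singleton_subset_iff]
        exact h1
  · push_neg at hcen
    obtain ⟨y, hyS, hync⟩ := hcen
    have Hbr : ∀ i j : Fin d, i ≠ j → ∀ z ∈ S, E i j * z - z * E i j ∈ S :=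
      fun i j hij z hz => bracket_mem a123 a132 a213 a231 a312 a321 S hS hij hz
    have hexE : ∃ i j : Fin d, i ≠ j ∧ E i j ∈ S := by
      by_cases hoff : ∃ i j : Fin d, i ≠ j ∧ y i j ≠ 0
      · obtain ⟨i, j, hij, hyij⟩ := hoff
        have h1 := Hbr j i (Ne.symm hij) y hyS
        have h2 := Hbr j i (Ne.symm hij) _ h1
        have hsq : E j i * E j i = 0 := E_sq (Ne.symm hij)
        have hsand : E j i * y * E j i = y i j • E j i := E_sandwich j i y
        have he : E j i * (E j i * y - y * E j i) - (E j i * y - y * E j i) * E j i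
            = ((-2 : ℂ) * y i j) • E j i := by
          have expand : E j i * (E j i * y - y * E j i) - (E j i * y - y * E j i) * E j i
              = E j i * E j i * y - (E j i * y * E j i + E j i * y * E j i)
                + y * (E j i * E j i) := by noncomm_ring
          rw [expand, hsq, hsand, zero_mul, mul_zero, zero_sub, add_zero,
            ← two_smul ℂ (y i j • E j i), smul_smul, ← neg_smul]
          congr 1
          ring
        rw [he] at h2
        have hc2 : (-2 : ℂ) * y i j ≠ 0 := mul_ne_zero (by norm_num) hyij
        refine ⟨j, i, Ne.symm hij, ?_⟩
        have := S.smul_mem ((-2 : ℂ) * y i j)⁻¹ h2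
        rwa [smul_smul, inv_mul_cancel₀ hc2, one_smul] at this
      · push_neg at hoff
        have hdiagne : ∃ i j : Fin d, y i i ≠ y j j := by
          by_contra hall
          push_neg at hall
          set i0 : Fin d := ⟨0, hdpos⟩
          refine hync (y i0 i0) ?_
          ext p q
          by_cases hpq : p = q
          · rw [hpq, Matrix.smul_apply, Matrix.one_apply_eq, smul_eq_mul, mul_one]
            exact hall q i0
          · rw [Matrix.smul_apply, Matrix.one_apply_ne hpq, smul_eq_mul, mul_zero]
            exact hoff p q hpq
        obtain ⟨i, j, hij⟩ := hdiagne
        have hne : i ≠ j := fun h => hij (by rw [h])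
        have h1 := Hbr i j hne y hyS
        have he : E i j * y - y * E i j = (y j j - y i i) • E i j := by
          ext p q
          rw [Matrix.sub_apply, E_mul_apply, mul_E_apply, Matrix.smul_apply]
          by_cases hp : p = i
          · rw [if_pos hp]
            by_cases hq : q = j
            · rw [if_pos hq, hp, hq,
                show E i j i j = 1 from Matrix.single_apply_same i j 1,
                smul_eq_mul, mul_one]
            · rw [if_neg hq, sub_zero, hoff j q (fun h => hq h.symm),
                show E i j p q = 0 from
                  Matrix.single_apply_of_ne _ _ _ _ _ (fun hc => hq hc.2.symm), smul_zero]
          · rw [if_neg hp]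
            by_cases hq : q = j
            · rw [if_pos hq, zero_sub, hoff p i hp,
                show E i j p q = 0 from
                  Matrix.single_apply_of_ne _ _ _ _ _ (fun hc => hp hc.1.symm),
                smul_zero, neg_zero]
            · rw [if_neg hq, sub_zero,
                show E i j p q = 0 from
                  Matrix.single_apply_of_ne _ _ _ _ _ (fun hc => hq hc.2.symm), smul_zero]
        rw [he] at h1
        have hcne : y j j - y i i ≠ 0 := sub_ne_zero.mpr (Ne.symm hij)
        refine ⟨i, j, hne, ?_⟩
        have := S.smul_mem (y j j - y i i)⁻¹ h1
        rwa [smul_smul, inv_mul_cancel₀ hcne, one_smul] at this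
    obtain ⟨i, j, hij, hEij⟩ := hexE
    obtain ⟨hD, hDiag⟩ := generation S Hbr hij hEij
    have slle : ∀ m : Matrix (Fin d) (Fin d) ℂ, Matrix.trace m = 0 → m ∈ S :=
      traceless_mem S j hD hDiag
    by_cases htr : ∃ z ∈ S, Matrix.trace z ≠ 0
    · right; right; right
      obtain ⟨z, hzS, hz⟩ := htr
      rw [eq_top_iff]
      intro m _
      have h1 : m - (Matrix.trace m / Matrix.trace z) • z ∈ S := by
        apply slle
        rw [Matrix.trace_sub, Matrix.trace_smul, smul_eq_mul,
          div_mul_cancel₀ _ hz, sub_self]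
      have h2 := S.add_mem h1 (S.smul_mem (Matrix.trace m / Matrix.trace z) hzS)
      rwa [sub_add_cancel] at h2
    · right; right; left
      push_neg at htr
      ext x
      simp only [SetLike.mem_coe, Set.mem_setOf_eq]
      exact ⟨fun h => htr x h, fun h => slle x h⟩
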